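/- (Factorization of the cubic phase in conic coordinates for collinear spatial frequencies.) Let e ∈ ℝ² be a unit vector and let η̄ = (η₀, p·e), σ̄ = (σ₀, q·e), ρ̄ = (ρ₀, r·e) with p, q, r ∈ ℝ, and set ξ̄ = η̄ + σ̄ + ρ̄. Define, for a vector v̄ with v = t·e, the signed conic coordinates A(v̄) = √3·v₀ + t and B(v̄) = √3·v₀ − t. Then 6√3 · φ₃(ξ̄, η̄, σ̄) = 3(A(η̄)+A(σ̄))(A(σ̄)+A(ρ̄))(A(ρ̄)+A(η̄)) + 3(B(η̄)+B(σ̄))(B(σ̄)+B(ρ̄))(B(ρ̄)+B(η̄)). -/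

import Mathlib

noncomputable section

/-- The frequency space `ℝ × ℝ²`, represented as Euclidean `ℝ³`:
coordinate `0` is `v₀` and coordinates `1, 2` form the spatial part `v`. -/
abbrev E3 : Type := EuclideanSpace ℝ (Fin 3)

/-- The dispersion relation `ω(v̄) = v₀(v₀² + |v|²)`. -/
def omega (v : E3) : ℝ := v 0 * ((v 0) ^ 2 + (v 1) ^ 2 + (v 2) ^ 2)

/-- The cubic phase `φ₃(ξ̄,η̄,σ̄) = ω(ξ̄) − ω(η̄) − ω(σ̄) − ω(ρ̄)` with `ρ̄ = ξ̄ − η̄ − σ̄`. -/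
def phi3 (ξ η σ : E3) : ℝ := omega ξ - omega η - omega σ - omega (ξ - η - σ)

/-- Build an element of `E3` from its three coordinates. -/
def vec3 (a b c : ℝ) : E3 := WithLp.toLp 2 ![a, b, c]

theorem stmt_5 (e1 e2 : ℝ) (he : e1 ^ 2 + e2 ^ 2 = 1) (η0 σ0 ρ0 p q r : ℝ) :
    6 * Real.sqrt 3 *
        phi3
          (vec3 η0 (p * e1) (p * e2) + vec3 σ0 (q * e1) (q * e2) + vec3 ρ0 (r * e1) (r * e2))
          (vec3 η0 (p * e1) (p * e2)) (vec3 σ0 (q * e1) (q * e2)) =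
      3 * ((Real.sqrt 3 * η0 + p) + (Real.sqrt 3 * σ0 + q)) *
          ((Real.sqrt 3 * σ0 + q) + (Real.sqrt 3 * ρ0 + r)) *
          ((Real.sqrt 3 * ρ0 + r) + (Real.sqrt 3 * η0 + p)) +
      3 * ((Real.sqrt 3 * η0 - p) + (Real.sqrt 3 * σ0 - q)) *
          ((Real.sqrt 3 * σ0 - q) + (Real.sqrt 3 * ρ0 - r)) *
          ((Real.sqrt 3 * ρ0 - r) + (Real.sqrt 3 * η0 - p)) := by
  have hs : Real.sqrt 3 ^ 2 = 3 := Real.sq_sqrt (by norm_num)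
  simp only [phi3, omega, vec3]
  simp only [PiLp.add_apply, PiLp.sub_apply]
  simp [Matrix.cons_val_zero, Matrix.cons_val_one, Matrix.head_cons,
    show ((2:Fin 3) : Fin 3) = 2 from rfl]
  linear_combination (6*Real.sqrt 3*((η0+σ0+ρ0)*(p+q+r)^2 - η0*p^2 - σ0*q^2 - ρ0*r^2))*he
    + (-6*Real.sqrt 3*(η0+σ0)*(σ0+ρ0)*(ρ0+η0))*hs
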